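/- An abelian group A belongs to C_p if and only if the p-primary torsion subgroup τ_p(A) is finite and (A/τ(A)) ⊗ Z_(p) is a finitely generated Z_(p)-module, where τ(A) is the full torsion subgroup of A. -/

import Mathlib

open scoped TensorProduct

noncomputable section

instance ZpSpanIsPrime (p : ℕ) [hp : Fact p.Prime] : (Ideal.span {(p : ℤ)}).IsPrime := by
  rw [Ideal.span_singleton_prime (by exact_mod_cast hp.out.ne_zero)]
  exact Nat.prime_iff_prime_int.mp hp.out

/-- `Z_(p)`, the localization of `ℤ` at the prime `p`. -/
abbrev Zp (p : ℕ) [Fact p.Prime] : Type :=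
  Localization.AtPrime (Ideal.span {(p : ℤ)})

/-- The class `C_p` of abelian groups `A` such that `A ⊗ Z_(p)` is a finitely
generated `Z_(p)`-module. -/
def MemCp (p : ℕ) [Fact p.Prime] (A : Type) [AddCommGroup A] : Prop :=
  Module.Finite (Zp p) (Zp p ⊗[ℤ] A)

namespace MemCpAux

variable (p : ℕ) [hp : Fact p.Prime]

/-- The complement of the prime ideal `(p)` in `ℤ`. -/
abbrev S : Submonoid ℤ := (Ideal.span {(p : ℤ)}).primeCompl

lemma mem_S {m : ℤ} (hm : ¬ (p : ℤ) ∣ m) : m ∈ S p := fun h =>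
  hm (Ideal.mem_span_singleton.mp h)

lemma not_dvd_of_mem_S {m : ℤ} (hm : m ∈ S p) : ¬ (p : ℤ) ∣ m := fun h =>
  hm (Ideal.mem_span_singleton.mpr h)

lemma isUnit_map {m : ℤ} (hm : ¬ (p : ℤ) ∣ m) : IsUnit (algebraMap ℤ (Zp p) m) :=
  IsLocalization.map_units (Zp p) (⟨m, mem_S p hm⟩ : S p)

section ZpModule

variable {M : Type} [AddCommGroup M] [Module (Zp p) M]

lemma algmap_smul (m : ℤ) (y : M) : (algebraMap ℤ (Zp p) m) • y = m • y := by
  have h : algebraMap ℤ (Zp p) m = ((m : ℤ) : Zp p) := by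
    have := map_intCast (algebraMap ℤ (Zp p)) m
    rwa [Int.cast_id] at this
  rw [h]
  exact Int.cast_smul_eq_zsmul _ m y

/-- If `m` is coprime to `p` and kills `y`, then `y = 0` in any `Z_(p)`-module. -/
lemma smul_eq_zero_of_coprime {m : ℤ} (hm : ¬ (p : ℤ) ∣ m) {y : M} (hy : m • y = 0) :
    y = 0 := by
  obtain ⟨w, hw⟩ := (isUnit_map p hm).exists_left_inv
  calc y = (1 : Zp p) • y := (one_smul _ _).symm
    _ = (w * algebraMap ℤ (Zp p) m) • y := by rw [hw]
    _ = w • (algebraMap ℤ (Zp p) m) • y := by rw [mul_smul]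
    _ = w • (m • y) := by rw [algmap_smul]
    _ = 0 := by rw [hy, smul_zero]

/-- If `y` is killed by a nonzero integer, it is killed by a power of `p`. -/
lemma ppow_smul_eq_zero {y : M} {a : ℤ} (ha : a ≠ 0) (hy : a • y = 0) :
    ∃ k : ℕ, ((p : ℤ) ^ k) • y = 0 := by
  set n := a.natAbs with hn
  have hn0 : n ≠ 0 := Int.natAbs_ne_zero.mpr ha
  have hyn : (n : ℤ) • y = 0 := by
    rcases Int.natAbs_eq a with h | h
    · rw [← h, hy]
    · rw [← neg_neg ((n : ℤ)), ← h, neg_smul, hy, neg_zero]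
  refine ⟨n.factorization p, ?_⟩
  set k := n.factorization p with hk
  set m : ℕ := n / p ^ k with hm
  have hmul : p ^ k * m = n := Nat.ordProj_mul_ordCompl_eq_self n p
  have hpm : ¬ p ∣ m := Nat.not_dvd_ordCompl hp.out hn0
  have hpm' : ¬ (p : ℤ) ∣ (m : ℤ) := by exact_mod_cast hpm
  apply smul_eq_zero_of_coprime p hpm'
  rw [← mul_smul]
  have h2 : ((m : ℤ) * (p : ℤ) ^ k) = (n : ℤ) := by
    push_cast [← hmul]; ring
  rw [h2, hyn]

/-- Action of `Z_(p)` on a `p`-power-torsion element reduces to an integer action. -/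
lemma exists_int_smul {y : M} {k : ℕ} (hy : ((p : ℤ) ^ k) • y = 0) (z : Zp p) :
    ∃ n : ℤ, z • y = n • y := by
  obtain ⟨a, s, rfl⟩ := IsLocalization.exists_mk'_eq (S p) z
  have hs : ¬ (p : ℤ) ∣ (s : ℤ) := not_dvd_of_mem_S p s.2
  have hcop : IsCoprime ((s : ℤ)) ((p : ℤ) ^ k) :=
    (((Nat.prime_iff_prime_int.mp hp.out).coprime_iff_not_dvd).mpr hs).symm.pow_right
  obtain ⟨u, v, huv⟩ := hcop
  refine ⟨u * a, ?_⟩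
  set z := IsLocalization.mk' (Zp p) a s with hz
  have key : (s : ℤ) • (z • y) = a • y := by
    rw [← algmap_smul p (s : ℤ) (z • y), ← mul_smul]
    have : algebraMap ℤ (Zp p) (s : ℤ) * z = algebraMap ℤ (Zp p) a := by
      rw [hz]; exact IsLocalization.mk'_spec' (Zp p) a s
    rw [this, algmap_smul]
  calc z • y = ((u * (s : ℤ) + v * (p : ℤ) ^ k) : ℤ) • (z • y) := by rw [huv, one_smul]
    _ = (u * (s : ℤ)) • (z • y) + (v * (p : ℤ) ^ k) • (z • y) := add_smul _ _ _
    _ = u • ((s : ℤ) • (z • y)) + v • (z • (((p : ℤ) ^ k) • y)) := by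
        rw [mul_smul, mul_smul, smul_comm ((p : ℤ) ^ k) z y]
    _ = u • (a • y) + 0 := by rw [key, hy, smul_zero, smul_zero]
    _ = (u * a) • y := by rw [add_zero, mul_smul]

end ZpModule

section TensorLemmas

variable (A : Type) [AddCommGroup A]

lemma tmul_eq_zero {x : A} {m : ℤ} (hm : ¬ (p : ℤ) ∣ m) (hx : m • x = 0) (z : Zp p) :
    z ⊗ₜ[ℤ] x = (0 : Zp p ⊗[ℤ] A) := by
  obtain ⟨w, hw⟩ := (isUnit_map p hm).exists_left_inv
  have h1 : algebraMap ℤ (Zp p) m = ((m : ℤ) : Zp p) := by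
    have := map_intCast (algebraMap ℤ (Zp p)) m
    rwa [Int.cast_id] at this
  have hz : z = ((m : ℤ) : Zp p) * (z * w) := by
    calc z = z * (w * algebraMap ℤ (Zp p) m) := by rw [hw, mul_one]
      _ = ((m : ℤ) : Zp p) * (z * w) := by rw [h1]; ring
  have hz2 : m • (z * w) = z := by rw [zsmul_eq_mul, ← hz]
  calc z ⊗ₜ[ℤ] x = (m • (z * w)) ⊗ₜ[ℤ] x := by rw [hz2]
    _ = m • ((z * w) ⊗ₜ[ℤ] x) := map_zsmul (((TensorProduct.mk ℤ (Zp p) A).flip) x) m (z * w)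
    _ = (z * w) ⊗ₜ[ℤ] (m • x) := (map_zsmul (TensorProduct.mk ℤ (Zp p) A (z * w)) m x).symm
    _ = 0 := by rw [hx, TensorProduct.tmul_zero]

/-- Every torsion element has the same image in `Z_(p) ⊗ A` as some element of the
`p`-primary component. -/
lemma exists_primary_tmul {t : A} (ht : t ∈ AddCommGroup.torsion A) :
    ∃ u ∈ AddCommGroup.primaryComponent A p,
      ∀ z : Zp p, z ⊗ₜ[ℤ] t = (z ⊗ₜ[ℤ] u : Zp p ⊗[ℤ] A) := by
  have ht' : IsOfFinAddOrder t := ht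
  set n := addOrderOf t with hn
  have hn0 : n ≠ 0 := ht'.addOrderOf_pos.ne'
  set k := n.factorization p with hk
  set m : ℕ := n / p ^ k with hm
  have hmul : p ^ k * m = n := Nat.ordProj_mul_ordCompl_eq_self n p
  have hpm : ¬ p ∣ m := Nat.not_dvd_ordCompl hp.out hn0
  have hpm' : ¬ (p : ℤ) ∣ (m : ℤ) := by exact_mod_cast hpm
  have hcop : IsCoprime ((p : ℤ) ^ k) ((m : ℤ)) :=
    (((Nat.prime_iff_prime_int.mp hp.out).coprime_iff_not_dvd).mpr hpm').pow_left
  obtain ⟨a, b, hab⟩ := hcop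
  have hnt : (n : ℤ) • t = 0 := by
    rw [natCast_zsmul]
    exact addOrderOf_nsmul_eq_zero t
  refine ⟨(b * (m : ℤ)) • t, ?_, ?_⟩
  · have hk0 : ((p : ℤ) ^ k) • ((b * (m : ℤ)) • t) = 0 := by
      rw [← mul_smul]
      have h2 : (p : ℤ) ^ k * (b * (m : ℤ)) = b * (n : ℤ) := by
        push_cast [← hmul]; ring
      rw [h2, mul_smul, hnt, smul_zero]
    have hdvd : addOrderOf ((b * (m : ℤ)) • t) ∣ p ^ k := by
      apply addOrderOf_dvd_of_nsmul_eq_zero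
      have h3 : ((p ^ k : ℕ) : ℤ) • ((b * (m : ℤ)) • t) = 0 := by
        push_cast
        exact hk0
      rwa [natCast_zsmul] at h3
    obtain ⟨j, _, hje⟩ := (Nat.dvd_prime_pow hp.out).mp hdvd
    exact ⟨j, by rw [← hje]; exact addOrderOf_nsmul_eq_zero _⟩
  · intro z
    have hsub : (m : ℤ) • (t - (b * (m : ℤ)) • t) = 0 := by
      rw [smul_sub, ← mul_smul, ← sub_smul]
      have h3 : (m : ℤ) - (m : ℤ) * (b * (m : ℤ)) = a * (n : ℤ) := by
        have h4 : (1 : ℤ) - b * (m : ℤ) = a * (p : ℤ) ^ k := by linarith [hab]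
        have h5 : ((p : ℤ) ^ k) * (m : ℤ) = (n : ℤ) := by push_cast [← hmul]; ring
        calc (m : ℤ) - (m : ℤ) * (b * (m : ℤ)) = (m : ℤ) * (1 - b * (m : ℤ)) := by ring
          _ = (m : ℤ) * (a * (p : ℤ) ^ k) := by rw [h4]
          _ = a * ((p : ℤ) ^ k * (m : ℤ)) := by ring
          _ = a * (n : ℤ) := by rw [h5]
      rw [h3, mul_smul, hnt, smul_zero]
    have h0 : z ⊗ₜ[ℤ] (t - (b * (m : ℤ)) • t) = (0 : Zp p ⊗[ℤ] A) :=
      tmul_eq_zero p A hpm' hsub z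
    rw [TensorProduct.tmul_sub] at h0
    exact (sub_eq_zero.mp h0)


lemma S_le_nonZeroDivisors : S p ≤ nonZeroDivisors ℤ := fun x hx =>
  mem_nonZeroDivisors_iff_ne_zero.mpr (fun h0 => hx (by rw [h0]; exact zero_mem _))

/-- The quotient map `A → A ⧸ τ(A)` as a `ℤ`-linear map. -/
abbrev qmap : A →ₗ[ℤ] A ⧸ AddCommGroup.torsion A :=
  (QuotientAddGroup.mk' (AddCommGroup.torsion A)).toIntLinearMap

lemma qmap_surjective : Function.Surjective (qmap A) :=
  QuotientAddGroup.mk'_surjective _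

variable {B : Type} [AddCommGroup B]

/-- `Z_(p) ⊗ -` applied to a `ℤ`-linear map, as a `Z_(p)`-linear map. -/
def zpTensorMap (g : A →ₗ[ℤ] B) : Zp p ⊗[ℤ] A →ₗ[Zp p] Zp p ⊗[ℤ] B :=
  { g.lTensor (Zp p) with
    map_smul' := by
      intro z x
      induction x using TensorProduct.induction_on with
      | zero => simp
      | tmul w m =>
        show (g.lTensor (Zp p)) (z • w ⊗ₜ[ℤ] m) = z • (g.lTensor (Zp p)) (w ⊗ₜ[ℤ] m)
        rw [TensorProduct.smul_tmul', smul_eq_mul, LinearMap.lTensor_tmul,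
          LinearMap.lTensor_tmul, TensorProduct.smul_tmul', smul_eq_mul]
      | add a b ha hb =>
        show (g.lTensor (Zp p)) (z • (a + b)) = z • (g.lTensor (Zp p)) (a + b)
        rw [smul_add, map_add, map_add, smul_add]
        rw [show (g.lTensor (Zp p)) (z • a) = z • (g.lTensor (Zp p)) a from ha,
          show (g.lTensor (Zp p)) (z • b) = z • (g.lTensor (Zp p)) b from hb] }

lemma zpTensorMap_coe (g : A →ₗ[ℤ] B) : ⇑(zpTensorMap p A g) = ⇑(g.lTensor (Zp p)) := rfl

/-- The induced map `Z_(p) ⊗ A → Z_(p) ⊗ (A ⧸ τ(A))`. -/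
abbrev pimap : Zp p ⊗[ℤ] A →ₗ[Zp p] Zp p ⊗[ℤ] (A ⧸ AddCommGroup.torsion A) :=
  zpTensorMap p A (qmap A)

lemma pimap_surjective : Function.Surjective (pimap p A) := by
  rw [show ⇑(pimap p A) = ⇑((qmap A).lTensor (Zp p)) from rfl]
  exact LinearMap.lTensor_surjective _ (qmap_surjective A)

lemma qmap_exact :
    Function.Exact ((AddSubgroup.subtype (AddCommGroup.torsion A)).toIntLinearMap) (qmap A) := by
  intro x
  constructor
  · intro hx
    have hx' : x ∈ AddCommGroup.torsion A := by
      rwa [AddMonoidHom.coe_toIntLinearMap, QuotientAddGroup.mk'_apply,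
        QuotientAddGroup.eq_zero_iff] at hx
    exact ⟨⟨x, hx'⟩, rfl⟩
  · rintro ⟨y, rfl⟩
    show QuotientAddGroup.mk' _ (y : A) = 0
    rw [QuotientAddGroup.mk'_apply, QuotientAddGroup.eq_zero_iff]
    exact y.2

/-- Comparison map `Z_(p) ⊗ A → (S p)⁻¹ A` into the localized module. -/
def toLoc : Zp p ⊗[ℤ] A →ₗ[ℤ] LocalizedModule (S p) A :=
  TensorProduct.lift
    { toFun := fun z =>
        { toFun := fun x => z • LocalizedModule.mkLinearMap (S p) A x
          map_add' := by intro x y; show z • _ = z • _ + z • _; rw [map_add, smul_add]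
          map_smul' := by
            intro n x
            show z • _ = n • (z • _)
            rw [map_zsmul, smul_comm] }
      map_add' := by
        intro z w
        ext x
        simp only [LinearMap.coe_mk, AddHom.coe_mk, LinearMap.add_apply]
        rw [add_smul]
      map_smul' := by
        intro n z
        ext x
        simp only [LinearMap.coe_mk, AddHom.coe_mk, RingHom.id_apply, LinearMap.smul_apply]
        rw [zsmul_eq_mul, mul_smul, Int.cast_smul_eq_zsmul] }

lemma tmul_one_eq_zero_iff (x : A) (h : (1 : Zp p) ⊗ₜ[ℤ] x = (0 : Zp p ⊗[ℤ] A)) :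
    ∃ s : S p, (s : ℤ) • x = 0 := by
  have h1 : toLoc p A ((1 : Zp p) ⊗ₜ[ℤ] x) = LocalizedModule.mk x 1 := by
    show (1 : Zp p) • LocalizedModule.mkLinearMap (S p) A x = LocalizedModule.mk x 1
    rw [one_smul]
    rfl
  rw [h, map_zero] at h1
  have h2 : LocalizedModule.mk x (1 : S p) = LocalizedModule.mk (0 : A) (1 : S p) := by
    rw [← h1, LocalizedModule.zero_mk]
  obtain ⟨u, hu⟩ := LocalizedModule.mk_eq.mp h2
  refine ⟨u, ?_⟩
  rw [one_smul, one_smul, smul_zero] at hu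
  rw [← Submonoid.smul_def]
  exact hu

lemma backward (h1 : Finite ↥(AddCommGroup.primaryComponent A p))
    (h2 : Module.Finite (Zp p) (Zp p ⊗[ℤ] (A ⧸ AddCommGroup.torsion A))) :
    Module.Finite (Zp p) (Zp p ⊗[ℤ] A) := by
  classical
  set ι0 := (AddSubgroup.subtype (AddCommGroup.torsion A)).toIntLinearMap with hι0
  set ι := zpTensorMap p ↥(AddCommGroup.torsion A) ι0 with hι
  have hexT : Function.Exact ι (pimap p A) := by
    have h := lTensor_exact (Zp p) (qmap_exact A) (qmap_surjective A)
    exact h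
  have hker : LinearMap.ker (pimap p A) =
      Submodule.span (Zp p) (Set.range (fun t : AddCommGroup.primaryComponent A p =>
        ((1 : Zp p) ⊗ₜ[ℤ] (t : A) : Zp p ⊗[ℤ] A))) := by
    apply le_antisymm
    · rw [hexT.linearMap_ker_eq]
      rintro x ⟨y, rfl⟩
      induction y using TensorProduct.induction_on with
      | zero => simp
      | tmul z t =>
        obtain ⟨u, hu, hzu⟩ := exists_primary_tmul p A t.2
        have h5 : ι (z ⊗ₜ[ℤ] t) = z ⊗ₜ[ℤ] (t : A) := by
          show (ι0.lTensor (Zp p)) (z ⊗ₜ[ℤ] t) = z ⊗ₜ[ℤ] (t : A)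
          rw [LinearMap.lTensor_tmul]
          rfl
        rw [h5, hzu z]
        have h6 : z ⊗ₜ[ℤ] u = z • ((1 : Zp p) ⊗ₜ[ℤ] u : Zp p ⊗[ℤ] A) := by
          rw [TensorProduct.smul_tmul', smul_eq_mul, mul_one]
        rw [h6]
        exact Submodule.smul_mem _ z (Submodule.subset_span ⟨⟨u, hu⟩, rfl⟩)
      | add a b ha hb => rw [map_add]; exact Submodule.add_mem _ ha hb
    · rw [Submodule.span_le]
      rintro x ⟨t, rfl⟩
      have htor : (t : A) ∈ AddCommGroup.torsion A := by
        obtain ⟨j, hj⟩ := t.2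
        show IsOfFinAddOrder (t : A)
        refine isOfFinAddOrder_iff_nsmul_eq_zero.mpr ⟨p ^ j, ?_, hj⟩
        exact pow_pos hp.out.pos j
      simp only [SetLike.mem_coe, LinearMap.mem_ker]
      have h7 : pimap p A ((1 : Zp p) ⊗ₜ[ℤ] (t : A)) = (1 : Zp p) ⊗ₜ[ℤ] (qmap A (t : A)) := by
        show ((qmap A).lTensor (Zp p)) ((1 : Zp p) ⊗ₜ[ℤ] (t : A)) = _
        rw [LinearMap.lTensor_tmul]
      have h8 : qmap A (t : A) = 0 := by
        show QuotientAddGroup.mk' _ (t : A) = 0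
        rw [QuotientAddGroup.mk'_apply, QuotientAddGroup.eq_zero_iff]
        exact htor
      rw [h7, h8, TensorProduct.tmul_zero]
  constructor
  apply Submodule.fg_of_fg_map_of_fg_inf_ker (pimap p A)
  · rw [Submodule.map_top, LinearMap.range_eq_top.mpr (pimap_surjective p A)]
    exact Module.finite_def.mp h2
  · rw [top_inf_eq, hker]
    exact Submodule.fg_span (Set.finite_range _)

lemma forward_finite (h : Module.Finite (Zp p) (Zp p ⊗[ℤ] A)) :
    Finite ↥(AddCommGroup.primaryComponent A p) := by
  classical
  haveI := h
  haveI hNoe : IsNoetherianRing (Zp p) :=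
    IsLocalization.isNoetherianRing (S p) (Zp p) (by infer_instance)
  haveI : IsDomain (Zp p) := IsLocalization.isDomain_localization (S_le_nonZeroDivisors p)
  set f : A →ₗ[ℤ] Zp p ⊗[ℤ] A := TensorProduct.mk ℤ (Zp p) A 1 with hf
  have halg_inj : Function.Injective (algebraMap ℤ (Zp p)) :=
    IsLocalization.injective (Zp p) (S_le_nonZeroDivisors p)
  -- an integer annihilator for every torsion element
  have hann : ∀ y : Zp p ⊗[ℤ] A, y ∈ Submodule.torsion (Zp p) (Zp p ⊗[ℤ] A) →
      ∃ a : ℤ, a ≠ 0 ∧ a • y = 0 := by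
    intro y hy
    obtain ⟨c, hc⟩ := hy
    rw [Submonoid.smul_def] at hc
    obtain ⟨⟨a, s⟩, has⟩ := IsLocalization.surj (S p) (c : Zp p)
    refine ⟨a, ?_, ?_⟩
    · intro h0
      rw [h0, map_zero] at has
      have hs0 : algebraMap ℤ (Zp p) (s : ℤ) = 0 :=
        (mem_nonZeroDivisors_iff.mp c.2).2 _ (by rw [mul_comm] at has; exact has)
      exact (IsLocalization.map_units (Zp p) s).ne_zero hs0
    · have h9 : a • y = algebraMap ℤ (Zp p) a • y := (algmap_smul p a y).symm
      rw [h9, ← has, mul_comm, mul_smul, hc, smul_zero]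
  set T := Submodule.torsion (Zp p) (Zp p ⊗[ℤ] A) with hT
  -- elements of the primary component land in T under f
  have hmemT : ∀ t : AddCommGroup.primaryComponent A p, f (t : A) ∈ T := by
    intro t
    obtain ⟨j, hj⟩ := t.2
    have hord : ((p ^ j : ℕ) : ℤ) • (t : A) = 0 := by
      rw [natCast_zsmul, ← hj]
    have hnz : algebraMap ℤ (Zp p) ((p ^ j : ℕ) : ℤ) ∈ nonZeroDivisors (Zp p) := by
      apply mem_nonZeroDivisors_iff_ne_zero.mpr
      intro h0
      have hcast : ((p ^ j : ℕ) : ℤ) = 0 := halg_inj (by rw [h0, map_zero])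
      have hne : (p : ℕ) ^ j ≠ 0 := pow_ne_zero j hp.out.ne_zero
      exact hne (by exact_mod_cast hcast)
    refine ⟨⟨_, hnz⟩, ?_⟩
    rw [Submonoid.smul_def]
    show algebraMap ℤ (Zp p) ((p ^ j : ℕ) : ℤ) • f (t : A) = 0
    rw [algmap_smul, ← map_zsmul f, hord, map_zero]
  -- T is a finitely generated Zp-module
  haveI : IsNoetherian (Zp p) (Zp p ⊗[ℤ] A) := isNoetherian_of_isNoetherianRing_of_finite _ _
  obtain ⟨sT, hsT⟩ := IsNoetherian.noetherian T
  set N : Submodule ℤ (Zp p ⊗[ℤ] A) := Submodule.span ℤ (↑sT : Set (Zp p ⊗[ℤ] A)) with hN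
  have hgenT : ∀ x ∈ (↑sT : Set (Zp p ⊗[ℤ] A)), x ∈ T := fun x hx =>
    hsT ▸ Submodule.subset_span hx
  have hgen : ∀ x ∈ (↑sT : Set (Zp p ⊗[ℤ] A)), ∃ k : ℕ, ((p : ℤ) ^ k) • x = 0 := by
    intro x hx
    obtain ⟨a, ha0, hax⟩ := hann x (hgenT x hx)
    exact ppow_smul_eq_zero p ha0 hax
  -- N is stable under the Zp-action
  have hstab : ∀ (z : Zp p), ∀ x ∈ N, z • x ∈ N := by
    intro z x hx
    induction hx using Submodule.span_induction with
    | mem g hg =>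
      obtain ⟨k, hk⟩ := hgen g hg
      obtain ⟨n, hn⟩ := exists_int_smul p hk z
      rw [hn]
      exact Submodule.smul_mem _ n (Submodule.subset_span hg)
    | zero => rw [smul_zero]; exact N.zero_mem
    | add a b _ _ iha ihb => rw [smul_add]; exact N.add_mem iha ihb
    | smul r g hg ih => rw [smul_comm]; exact Submodule.smul_mem _ r ih
  have hTN1 : ∀ x, x ∈ T → x ∈ N := by
    intro x hx
    have hx' : x ∈ Submodule.span (Zp p) (↑sT : Set (Zp p ⊗[ℤ] A)) := by
      rw [hsT]; exact hx
    clear hx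
    induction hx' using Submodule.span_induction with
    | mem g hg => exact Submodule.subset_span hg
    | zero => exact N.zero_mem
    | add a b _ _ iha ihb => exact N.add_mem iha ihb
    | smul z g _ ih => exact hstab z g ih
  have hTN2 : ∀ x, x ∈ N → x ∈ T := by
    intro x hx
    induction hx using Submodule.span_induction with
    | mem g hg => exact hgenT g hg
    | zero => exact T.zero_mem
    | add a b _ _ iha ihb => exact T.add_mem iha ihb
    | smul r g _ ih => rw [← Int.cast_smul_eq_zsmul (Zp p)]; exact T.smul_mem _ ih
  haveI hNfg : Module.Finite ℤ ↥N := Module.Finite.iff_fg.mpr (Submodule.fg_span sT.finite_toSet)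
  have hNtor : Module.IsTorsion ℤ ↥N := by
    intro x
    obtain ⟨a, ha0, hax⟩ := hann _ (hTN2 _ x.2)
    refine ⟨⟨a, mem_nonZeroDivisors_iff_ne_zero.mpr ha0⟩, ?_⟩
    rw [Submonoid.smul_def]
    apply Subtype.ext
    show a • (x : Zp p ⊗[ℤ] A) = 0
    exact hax
  haveI hNfinite : Finite ↥N := Module.finite_of_fg_torsion ↥N hNtor
  haveI hTfinite : Finite ↥T := by
    have hNset : (N : Set (Zp p ⊗[ℤ] A)).Finite := Set.toFinite _
    have hTset : (T : Set (Zp p ⊗[ℤ] A)).Finite := by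
      have hEq : (T : Set (Zp p ⊗[ℤ] A)) = (N : Set (Zp p ⊗[ℤ] A)) := by
        ext x
        exact ⟨fun hx => hTN1 x hx, fun hx => hTN2 x hx⟩
      rw [hEq]
      exact hNset
    exact hTset.to_subtype
  -- inject the primary component into T
  have hinj : Function.Injective (fun t : AddCommGroup.primaryComponent A p =>
      (⟨f (t : A), hmemT t⟩ : ↥T)) := by
    intro t t' htt
    have h0 : (1 : Zp p) ⊗ₜ[ℤ] ((t : A) - (t' : A)) = (0 : Zp p ⊗[ℤ] A) := by
      have hft : f ((t : A) - (t' : A)) = 0 := by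
        rw [map_sub, sub_eq_zero]
        exact congrArg Subtype.val htt
      exact hft
    obtain ⟨s, hs⟩ := tmul_one_eq_zero_iff p A _ h0
    obtain ⟨j, hj⟩ := (t - t').2
    have hp1 : ((p ^ j : ℕ) : ℤ) • ((t : A) - (t' : A)) = 0 := by
      rw [natCast_zsmul]
      have h10 := addOrderOf_nsmul_eq_zero ((t - t' : AddCommGroup.primaryComponent A p) : A)
      simpa using hj
    have hsdvd : ¬ (p : ℤ) ∣ (s : ℤ) := not_dvd_of_mem_S p s.2
    have hcop : IsCoprime ((s : ℤ)) (((p ^ j : ℕ)) : ℤ) := by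
      have h2 : IsCoprime ((s : ℤ)) ((p : ℤ) ^ j) :=
        (((Nat.prime_iff_prime_int.mp hp.out).coprime_iff_not_dvd).mpr hsdvd).symm.pow_right
      have h3 : (((p ^ j : ℕ)) : ℤ) = (p : ℤ) ^ j := by push_cast; ring
      rw [h3]
      exact h2
    obtain ⟨u, v, huv⟩ := hcop
    have hzero : (t : A) - (t' : A) = 0 := by
      calc (t : A) - (t' : A) = (1 : ℤ) • ((t : A) - (t' : A)) := (one_smul _ _).symm
        _ = (u * (s : ℤ) + v * ((p ^ j : ℕ) : ℤ)) • ((t : A) - (t' : A)) := by rw [huv]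
        _ = u • ((s : ℤ) • ((t : A) - (t' : A))) +
              v • (((p ^ j : ℕ) : ℤ) • ((t : A) - (t' : A))) := by
            rw [add_smul, mul_smul, mul_smul]
        _ = 0 := by rw [hs, hp1, smul_zero, smul_zero, add_zero]
    exact Subtype.ext (by rwa [sub_eq_zero] at hzero)
  exact Finite.of_injective _ hinj

end TensorLemmas

end MemCpAux

/-- `A ∈ C_p` iff `τ_p(A)` is finite and `(A/τ(A)) ⊗ Z_(p)` is a finitely
generated `Z_(p)`-module. -/
theorem memCp_iff (p : ℕ) [Fact p.Prime] (A : Type) [AddCommGroup A] :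
    MemCp p A ↔
      (Finite ↥(AddCommGroup.primaryComponent A p) ∧
        Module.Finite (Zp p) (Zp p ⊗[ℤ] (A ⧸ AddCommGroup.torsion A))) := by
  constructor
  · intro h
    have h' : Module.Finite (Zp p) (Zp p ⊗[ℤ] A) := h
    refine ⟨MemCpAux.forward_finite p A h', ?_⟩
    haveI := h'
    exact Module.Finite.of_surjective (MemCpAux.pimap p A) (MemCpAux.pimap_surjective p A)
  · rintro ⟨h1, h2⟩
    exact MemCpAux.backward p A h1 h2
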